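/- Let ℰ: ℝ^d → ℝ be continuous, bounded below by Ě, and satisfy the growth bounds c_l‖v‖₂^l − C_l ≤ ℰ(v) − Ě ≤ c_u‖v‖₂^l + C_u for some l, c_l, c_u, C_l, C_u > 0. Fix α > 0 and 0 < p ≤ q. Then there exists a constant C_Con, depending only on α, p, q, l, c_u, c_l, C_u, C_l, Ě, such that for every probability measure μ on ℝ^d with finite q-th moment, (∫‖v‖₂^p e^{−αℰ(v)} dμ) / (∫e^{−αℰ(v)} dμ) ≤ (C_Con · ∫‖v‖₂^q dμ)^{p/q}. -/

import Mathlib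

set_option maxHeartbeats 2000000


open MeasureTheory Set

lemma aux_poly_exp (p c l : ℝ) (hp : 0 < p) (hc : 0 < c) (hl : 0 < l) :
    ∃ A : ℝ, 0 < A ∧ ∀ r : ℝ, 0 ≤ r → r ^ p * Real.exp (-(c * r ^ l)) ≤ A := by
  obtain ⟨n, hn⟩ : ∃ n : ℕ, p ≤ n * l :=
    ⟨⌈p / l⌉₊, by rw [← div_le_iff₀ hl]; exact Nat.le_ceil _⟩
  refine ⟨1 + n.factorial / c ^ n, by positivity, fun r hr => ?_⟩
  have hs : (0:ℝ) ≤ r ^ l := Real.rpow_nonneg hr l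
  have hsn : (0:ℝ) ≤ (r ^ l) ^ n := pow_nonneg hs n
  have hrp : r ^ p ≤ 1 + (r ^ l) ^ n := by
    rcases le_total r 1 with h1 | h1
    · have := Real.rpow_le_one hr h1 hp.le
      linarith
    · calc r ^ p ≤ r ^ ((n:ℝ) * l) := Real.rpow_le_rpow_of_exponent_le h1 hn
        _ = (r ^ l) ^ n := by
            rw [mul_comm, Real.rpow_mul hr, Real.rpow_natCast]
        _ ≤ 1 + (r ^ l) ^ n := by linarith
  have hfact : (0:ℝ) < n.factorial := by exact_mod_cast n.factorial_pos
  have hcn : (0:ℝ) < c ^ n := by positivity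
  have h1 : (c * r ^ l) ^ n / n.factorial ≤ Real.exp (c * r ^ l) :=
    Real.pow_div_factorial_le_exp _ (by positivity : (0:ℝ) ≤ c * r ^ l) n
  have key : (r ^ l) ^ n * Real.exp (-(c * r ^ l)) ≤ n.factorial / c ^ n := by
    rw [div_le_iff₀ hfact] at h1
    have h4 : Real.exp (c * r ^ l) * Real.exp (-(c * r ^ l)) = 1 := by
      rw [← Real.exp_add, add_neg_cancel, Real.exp_zero]
    have h2 : (c * r ^ l) ^ n * Real.exp (-(c * r ^ l)) ≤ n.factorial := by
      calc (c * r ^ l) ^ n * Real.exp (-(c * r ^ l))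
          ≤ Real.exp (c * r ^ l) * n.factorial * Real.exp (-(c * r ^ l)) :=
            mul_le_mul_of_nonneg_right h1 (Real.exp_nonneg _)
        _ = n.factorial * (Real.exp (c * r ^ l) * Real.exp (-(c * r ^ l))) := by ring
        _ = n.factorial := by rw [h4, mul_one]
    rw [mul_pow] at h2
    rw [le_div_iff₀ hcn]
    calc (r ^ l) ^ n * Real.exp (-(c * r ^ l)) * c ^ n
        = c ^ n * (r ^ l) ^ n * Real.exp (-(c * r ^ l)) := by ring
      _ ≤ n.factorial := h2
  have hexp1 : Real.exp (-(c * r ^ l)) ≤ 1 := Real.exp_le_one_iff.mpr (by nlinarith)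
  calc r ^ p * Real.exp (-(c * r ^ l)) ≤ (1 + (r ^ l) ^ n) * Real.exp (-(c * r ^ l)) := by
        apply mul_le_mul_of_nonneg_right hrp (Real.exp_nonneg _)
    _ = Real.exp (-(c * r ^ l)) + (r ^ l) ^ n * Real.exp (-(c * r ^ l)) := by ring
    _ ≤ 1 + n.factorial / c ^ n := by linarith

/-- Quantitative bound on Gibbs-weighted `p`-th moments: there is a constant `C`
(depending only on the fixed data) such that for every probability measure `μ`
with finite `q`-th moment,
`(∫‖v‖^p e^{−αℰ} dμ)/(∫e^{−αℰ} dμ) ≤ (C ∫‖v‖^q dμ)^{p/q}`. -/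
theorem stmt_4 {d : ℕ} (ℰ : EuclideanSpace ℝ (Fin d) → ℝ)
    (Ebar l c_l c_u C_l C_u α p q : ℝ)
    (hcont : Continuous ℰ) (hlb : ∀ v, Ebar ≤ ℰ v)
    (hl : 0 < l) (hcl : 0 < c_l) (hcu : 0 < c_u) (hCl : 0 < C_l) (hCu : 0 < C_u)
    (hgrow_lo : ∀ v, c_l * ‖v‖ ^ l - C_l ≤ ℰ v - Ebar)
    (hgrow_hi : ∀ v, ℰ v - Ebar ≤ c_u * ‖v‖ ^ l + C_u)
    (hα : 0 < α) (hp : 0 < p) (hpq : p ≤ q) :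
    ∃ C : ℝ, 0 < C ∧
      ∀ μ : Measure (EuclideanSpace ℝ (Fin d)), IsProbabilityMeasure μ →
        Integrable (fun v => ‖v‖ ^ q) μ →
        (∫ v, ‖v‖ ^ p * Real.exp (-α * ℰ v) ∂μ) / (∫ v, Real.exp (-α * ℰ v) ∂μ)
          ≤ (C * ∫ v, ‖v‖ ^ q ∂μ) ^ (p / q) := by
  have hq : 0 < q := lt_of_lt_of_le hp hpq
  obtain ⟨A, hA, hAbd⟩ := aux_poly_exp p (α * c_l / 2) l hp (by positivity) hl
  set K : ℝ := Real.exp (-(α * (Ebar + C_u))) with hKdef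
  set K' : ℝ := Real.exp (α * (C_l - Ebar)) with hK'def
  have hK : 0 < K := Real.exp_pos _
  have hK' : 0 < K' := Real.exp_pos _
  set γ : ℝ := max 1 ((4 * c_u / c_l) ^ (1 / l)) with hγdef
  have hγ1 : (1:ℝ) ≤ γ := le_max_left _ _
  have hγ0 : (0:ℝ) < γ := lt_of_lt_of_le one_pos hγ1
  have hγl : 4 * c_u / c_l ≤ γ ^ l := by
    calc 4 * c_u / c_l = ((4 * c_u / c_l) ^ (1 / l)) ^ l := by
          rw [← Real.rpow_mul (by positivity), one_div_mul_cancel hl.ne', Real.rpow_one]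
      _ ≤ γ ^ l := Real.rpow_le_rpow (Real.rpow_nonneg (by positivity) _) (le_max_right _ _) hl.le
  set z0 : ℝ := K * Real.exp (-(α * c_u * 2 ^ (l / q))) / 2 with hz0def
  have hz0 : 0 < z0 := by
    rw [hz0def]; exact div_pos (mul_pos hK (Real.exp_pos _)) two_pos
  have hγp : 0 < γ ^ p := Real.rpow_pos_of_pos hγ0 _
  have h2pq : (0:ℝ) < 2 ^ (p / q) := Real.rpow_pos_of_pos two_pos _
  set C3 : ℝ := γ ^ p * 2 ^ (p / q) + Real.exp (-(α * Ebar)) * 2 ^ (p / q) / (2 * z0)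
      + 2 * K' * A / K with hC3def
  have ht1 : 0 < Real.exp (-(α * Ebar)) * 2 ^ (p / q) / (2 * z0) := by positivity
  have ht2 : 0 < 2 * K' * A / K := by positivity
  have hC3 : 0 < C3 := by
    rw [hC3def]; have := mul_pos hγp h2pq; linarith
  refine ⟨C3 ^ (q / p), Real.rpow_pos_of_pos hC3 _, fun μ hμ hMint => ?_⟩
  obtain ⟨M, hMdef⟩ : ∃ m : ℝ, m = ∫ v, ‖v‖ ^ q ∂μ := ⟨_, rfl⟩
  obtain ⟨Z, hZdef⟩ : ∃ z : ℝ, z = ∫ v, Real.exp (-α * ℰ v) ∂μ := ⟨_, rfl⟩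
  rw [← hMdef, ← hZdef]
  have hM0 : 0 ≤ M := by
    rw [hMdef]; exact integral_nonneg fun v => Real.rpow_nonneg (norm_nonneg v) q
  have hexp_cont : Continuous fun v : EuclideanSpace ℝ (Fin d) => Real.exp (-α * ℰ v) :=
    Real.continuous_exp.comp (continuous_const.mul hcont)
  have hub : ∀ v : EuclideanSpace ℝ (Fin d), Real.exp (-α * ℰ v) ≤ Real.exp (-(α * Ebar)) :=
    fun v => Real.exp_le_exp.mpr (by nlinarith [hlb v, mul_nonneg hα.le (sub_nonneg.mpr (hlb v))])
  have hZint : Integrable (fun v => Real.exp (-α * ℰ v)) μ := by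
    refine (integrable_const (Real.exp (-(α * Ebar)))).mono' hexp_cont.aestronglyMeasurable ?_
    exact ae_of_all _ fun v => by
      rw [Real.norm_eq_abs, abs_of_pos (Real.exp_pos _)]; exact hub v
  have hZpos : 0 < Z := by
    rw [hZdef, integral_pos_iff_support_of_nonneg (fun v => (Real.exp_pos (-α * ℰ v)).le) hZint]
    have hsup : (Function.support fun v : EuclideanSpace ℝ (Fin d) => Real.exp (-α * ℰ v))
        = Set.univ := Set.eq_univ_of_forall fun v => (Real.exp_pos _).ne'
    rw [hsup]
    simp
  have hnormp_cont : Continuous fun v : EuclideanSpace ℝ (Fin d) => ‖v‖ ^ p :=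
    continuous_norm.rpow_const fun v => Or.inr hp.le
  have hpow_le : ∀ v : EuclideanSpace ℝ (Fin d), ‖v‖ ^ p ≤ ‖v‖ ^ q + 1 := by
    intro v
    rcases le_total (‖v‖) 1 with h1 | h1
    · have h2 := Real.rpow_le_one (norm_nonneg v) h1 hp.le
      have h3 : (0:ℝ) ≤ ‖v‖ ^ q := Real.rpow_nonneg (norm_nonneg v) q
      linarith
    · have h2 := Real.rpow_le_rpow_of_exponent_le h1 hpq
      linarith
  have hNint : Integrable (fun v => ‖v‖ ^ p * Real.exp (-α * ℰ v)) μ := by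
    refine ((hMint.add (integrable_const 1)).const_mul (Real.exp (-(α * Ebar)))).mono'
      (hnormp_cont.mul hexp_cont).aestronglyMeasurable (ae_of_all _ fun v => ?_)
    rw [Real.norm_eq_abs, abs_of_nonneg (by positivity)]
    calc ‖v‖ ^ p * Real.exp (-α * ℰ v) ≤ (‖v‖ ^ q + 1) * Real.exp (-(α * Ebar)) := by
          apply mul_le_mul (hpow_le v) (hub v) (Real.exp_nonneg _) (by positivity)
      _ = Real.exp (-(α * Ebar)) * (‖v‖ ^ q + 1) := by ring
  rcases hM0.lt_or_eq with hM | hM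
  swap
  · -- M = 0
    have h0 : ∫ v, ‖v‖ ^ q ∂μ = 0 := by rw [← hMdef, ← hM]
    have hae := (integral_eq_zero_iff_of_nonneg
      (fun v => Real.rpow_nonneg (norm_nonneg v) q) hMint).mp h0
    have hae2 : (fun v => ‖v‖ ^ p * Real.exp (-α * ℰ v)) =ᵐ[μ] 0 := by
      filter_upwards [hae] with v hv
      have hv0 : ‖v‖ = 0 := by
        by_contra h
        have hpos : (0:ℝ) < ‖v‖ := (norm_nonneg v).lt_of_ne (Ne.symm h)
        exact (Real.rpow_pos_of_pos hpos q).ne' hv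
      simp [hv0, Real.zero_rpow hp.ne']
    have hN0 : ∫ v, ‖v‖ ^ p * Real.exp (-α * ℰ v) ∂μ = 0 := integral_eq_zero_of_ae hae2
    rw [hN0, zero_div, ← hM, mul_zero, Real.zero_rpow (div_pos hp hq).ne']
  · -- 0 < M
    set B : ℝ := (2 * M) ^ (1 / q) with hBdef
    have h2M : (0:ℝ) < 2 * M := by linarith
    have hB : 0 < B := Real.rpow_pos_of_pos h2M _
    have hBq : B ^ q = 2 * M := by
      rw [hBdef, ← Real.rpow_mul h2M.le, one_div, inv_mul_cancel₀ hq.ne', Real.rpow_one]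
    set S : ℝ := γ * B with hSdef
    have hS : 0 < S := mul_pos hγ0 hB
    have hBS : B ≤ S := by rw [hSdef]; nlinarith
    set ball := {v : EuclideanSpace ℝ (Fin d) | ‖v‖ ≤ B} with hballdef
    have hballmeas : MeasurableSet ball := measurableSet_le measurable_norm measurable_const
    have hMpq : 0 < M ^ (p / q) := Real.rpow_pos_of_pos hM _
    have hhalf : 1 / 2 ≤ (μ ball).toReal := by
      have hmark := mul_meas_ge_le_integral_of_nonneg
        (ae_of_all μ fun v : EuclideanSpace ℝ (Fin d) =>
          Real.rpow_nonneg (norm_nonneg v) q) hMint (2 * M)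
      rw [← hMdef] at hmark
      have hsub : ballᶜ ⊆ {v : EuclideanSpace ℝ (Fin d) | 2 * M ≤ ‖v‖ ^ q} := by
        intro v hv
        simp only [hballdef, Set.mem_compl_iff, Set.mem_setOf_eq, not_le] at hv ⊢
        calc 2 * M = B ^ q := hBq.symm
          _ ≤ ‖v‖ ^ q := Real.rpow_le_rpow hB.le hv.le hq.le
      have hle : (μ ballᶜ).toReal ≤ (μ {v : EuclideanSpace ℝ (Fin d) | 2 * M ≤ ‖v‖ ^ q}).toReal :=
        ENNReal.toReal_mono (measure_ne_top μ _) (measure_mono hsub)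
      have hsum : (μ ball).toReal + (μ ballᶜ).toReal = 1 := by
        rw [← ENNReal.toReal_add (measure_ne_top μ _) (measure_ne_top μ _),
          measure_add_measure_compl hballmeas, measure_univ, ENNReal.toReal_one]
      have htR : (0:ℝ) ≤ (μ {v : EuclideanSpace ℝ (Fin d) | 2 * M ≤ ‖v‖ ^ q}).toReal :=
        ENNReal.toReal_nonneg
      have hM2 : (μ {v : EuclideanSpace ℝ (Fin d) | 2 * M ≤ ‖v‖ ^ q}).toReal ≤ 1 / 2 := by
        simp only [Measure.real] at hmark
        nlinarith
      linarith
    have hZlb : K * Real.exp (-(α * c_u * B ^ l)) / 2 ≤ Z := by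
      have hGle : ∀ v, ball.indicator (fun _ => K * Real.exp (-(α * c_u * B ^ l))) v
          ≤ Real.exp (-α * ℰ v) := by
        intro v
        by_cases hv : v ∈ ball
        · rw [Set.indicator_of_mem hv]
          have h1 : ‖v‖ ^ l ≤ B ^ l := Real.rpow_le_rpow (norm_nonneg v) hv hl.le
          have h2 := hgrow_hi v
          rw [hKdef, ← Real.exp_add]
          apply Real.exp_le_exp.mpr
          have h3 : ℰ v ≤ Ebar + C_u + c_u * B ^ l := by
            nlinarith [mul_le_mul_of_nonneg_left h1 hcu.le]
          have h4 := mul_le_mul_of_nonneg_left h3 hα.le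
          linarith
        · rw [Set.indicator_of_notMem hv]; exact (Real.exp_pos _).le
      calc K * Real.exp (-(α * c_u * B ^ l)) / 2
          ≤ K * Real.exp (-(α * c_u * B ^ l)) * (μ ball).toReal := by
            nlinarith [mul_nonneg (mul_pos hK (Real.exp_pos (-(α * c_u * B ^ l)))).le
              (by linarith : (0:ℝ) ≤ (μ ball).toReal - 1 / 2)]
        _ = ∫ v, ball.indicator (fun _ => K * Real.exp (-(α * c_u * B ^ l))) v ∂μ := by
            rw [integral_indicator_const _ hballmeas, smul_eq_mul]; simp only [Measure.real]; ring
        _ ≤ Z := by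
            rw [hZdef]
            exact integral_mono ((integrable_const _).indicator hballmeas) hZint hGle
    set tailSet := {v : EuclideanSpace ℝ (Fin d) | S < ‖v‖} with htsdef
    have hts : MeasurableSet tailSet := measurableSet_lt measurable_const measurable_norm
    have hTint : Integrable (tailSet.indicator fun v => ‖v‖ ^ p * Real.exp (-α * ℰ v)) μ :=
      hNint.indicator hts
    have hTnonneg : ∀ v, 0 ≤ tailSet.indicator (fun v => ‖v‖ ^ p * Real.exp (-α * ℰ v)) v :=
      fun v => Set.indicator_nonneg (fun x _ => by positivity) v
    have hstep1 : ∫ v, ‖v‖ ^ p * Real.exp (-α * ℰ v) ∂μ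
        ≤ S ^ p * Z + ∫ v, tailSet.indicator (fun v => ‖v‖ ^ p * Real.exp (-α * ℰ v)) v ∂μ := by
      have hpt : ∀ v, ‖v‖ ^ p * Real.exp (-α * ℰ v)
          ≤ S ^ p * Real.exp (-α * ℰ v)
            + tailSet.indicator (fun v => ‖v‖ ^ p * Real.exp (-α * ℰ v)) v := by
        intro v
        rcases le_or_gt (‖v‖) S with h1 | h1
        · have h2 : ‖v‖ ^ p ≤ S ^ p := Real.rpow_le_rpow (norm_nonneg v) h1 hp.le
          have h3 := hTnonneg v
          nlinarith [mul_nonneg (sub_nonneg.mpr h2) (Real.exp_pos (-α * ℰ v)).le]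
        · rw [Set.indicator_of_mem (show v ∈ tailSet from h1)]
          nlinarith [mul_pos (Real.rpow_pos_of_pos hS p) (Real.exp_pos (-α * ℰ v))]
      calc ∫ v, ‖v‖ ^ p * Real.exp (-α * ℰ v) ∂μ
          ≤ ∫ v, (S ^ p * Real.exp (-α * ℰ v)
              + tailSet.indicator (fun v => ‖v‖ ^ p * Real.exp (-α * ℰ v)) v) ∂μ :=
            integral_mono hNint ((hZint.const_mul _).add hTint) hpt
        _ = S ^ p * Z + ∫ v, tailSet.indicator (fun v => ‖v‖ ^ p * Real.exp (-α * ℰ v)) v ∂μ := by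
            rw [integral_add (hZint.const_mul _) hTint, integral_const_mul, ← hZdef]
    have hstep2 : ∫ v, tailSet.indicator (fun v => ‖v‖ ^ p * Real.exp (-α * ℰ v)) v ∂μ
        ≤ (Real.exp (-(α * Ebar)) * 2 ^ (p / q) / (2 * z0) + 2 * K' * A / K)
          * (M ^ (p / q) * Z) := by
      rcases le_or_gt M 1 with hM1 | hM1
      · -- small M
        have hBl : B ^ l ≤ 2 ^ (l / q) := by
          have hB2 : B ≤ 2 ^ (1 / q) := by
            rw [hBdef]
            exact Real.rpow_le_rpow h2M.le (by linarith) (by positivity)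
          calc B ^ l ≤ (2 ^ (1 / q) : ℝ) ^ l := Real.rpow_le_rpow hB.le hB2 hl.le
            _ = 2 ^ (l / q) := by
                rw [← Real.rpow_mul (by norm_num : (0:ℝ) ≤ 2)]
                congr 1
                ring
        have hz0Z : z0 ≤ Z := by
          refine le_trans ?_ hZlb
          rw [hz0def]
          have hexpm : Real.exp (-(α * c_u * 2 ^ (l / q))) ≤ Real.exp (-(α * c_u * B ^ l)) :=
            Real.exp_le_exp.mpr (by nlinarith [mul_le_mul_of_nonneg_left hBl (mul_pos hα hcu).le])
          nlinarith [hK]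
        have hTle : ∀ v, tailSet.indicator (fun v => ‖v‖ ^ p * Real.exp (-α * ℰ v)) v
            ≤ Real.exp (-(α * Ebar)) * B ^ (p - q) * ‖v‖ ^ q := by
          intro v
          by_cases hv : v ∈ tailSet
          · rw [Set.indicator_of_mem hv]
            have hvS : S < ‖v‖ := hv
            have hv0 : 0 < ‖v‖ := lt_trans hS hvS
            have h1 : ‖v‖ ^ p = ‖v‖ ^ (p - q) * ‖v‖ ^ q := by
              rw [← Real.rpow_add hv0]; congr 1; ring
            have h2 : ‖v‖ ^ (p - q) ≤ B ^ (p - q) :=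
              Real.rpow_le_rpow_of_nonpos hB (le_trans hBS hvS.le) (by linarith)
            rw [h1]
            calc ‖v‖ ^ (p - q) * ‖v‖ ^ q * Real.exp (-α * ℰ v)
                ≤ B ^ (p - q) * ‖v‖ ^ q * Real.exp (-(α * Ebar)) := by
                  apply mul_le_mul
                    (mul_le_mul_of_nonneg_right h2 (Real.rpow_nonneg (norm_nonneg v) q))
                    (hub v) (Real.exp_nonneg _)
                  positivity
              _ = Real.exp (-(α * Ebar)) * B ^ (p - q) * ‖v‖ ^ q := by ring
          · rw [Set.indicator_of_notMem hv]
            positivity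
        have hBpqM : B ^ (p - q) * M = 2 ^ (p / q) * M ^ (p / q) / 2 := by
          rw [hBdef, ← Real.rpow_mul h2M.le]
          have he : 1 / q * (p - q) = p / q - 1 := by field_simp
          rw [he, Real.rpow_sub h2M, Real.rpow_one,
            Real.mul_rpow (by norm_num : (0:ℝ) ≤ 2) hM.le]
          field_simp
        calc ∫ v, tailSet.indicator (fun v => ‖v‖ ^ p * Real.exp (-α * ℰ v)) v ∂μ
            ≤ ∫ v, Real.exp (-(α * Ebar)) * B ^ (p - q) * ‖v‖ ^ q ∂μ :=
              integral_mono hTint (hMint.const_mul _) hTle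
          _ = Real.exp (-(α * Ebar)) * B ^ (p - q) * M := by
              rw [integral_const_mul, ← hMdef]
          _ = Real.exp (-(α * Ebar)) * 2 ^ (p / q) / (2 * z0) * (M ^ (p / q) * z0) := by
              rw [mul_assoc, hBpqM]
              field_simp
          _ ≤ Real.exp (-(α * Ebar)) * 2 ^ (p / q) / (2 * z0) * (M ^ (p / q) * Z) := by
              apply mul_le_mul_of_nonneg_left
                (mul_le_mul_of_nonneg_left hz0Z hMpq.le) ht1.le
          _ ≤ (Real.exp (-(α * Ebar)) * 2 ^ (p / q) / (2 * z0) + 2 * K' * A / K)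
                * (M ^ (p / q) * Z) := by
              apply mul_le_mul_of_nonneg_right (by linarith)
                (mul_nonneg hMpq.le hZpos.le)
      · -- large M
        have hMpq1 : 1 ≤ M ^ (p / q) := by
          have h := Real.rpow_le_rpow_of_exponent_le hM1.le
            (show (0:ℝ) ≤ p / q by positivity)
          rwa [Real.rpow_zero] at h
        have hSl : 2 * (α * c_u) * B ^ l ≤ α * c_l / 2 * S ^ l := by
          have h1 : S ^ l = γ ^ l * B ^ l := by
            rw [hSdef]; exact Real.mul_rpow hγ0.le hB.le
          rw [h1]
          have hBl0 : 0 ≤ B ^ l := Real.rpow_nonneg hB.le l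
          have h2 : 2 * (α * c_u) ≤ α * c_l / 2 * γ ^ l := by
            calc 2 * (α * c_u) = α * c_l / 2 * (4 * c_u / c_l) := by field_simp; ring
              _ ≤ α * c_l / 2 * γ ^ l := by
                  apply mul_le_mul_of_nonneg_left hγl (by positivity)
          nlinarith
        have hTle : ∀ v, tailSet.indicator (fun v => ‖v‖ ^ p * Real.exp (-α * ℰ v)) v
            ≤ K' * A * Real.exp (-(α * c_l / 2 * S ^ l)) := by
          intro v
          by_cases hv : v ∈ tailSet
          · rw [Set.indicator_of_mem hv]
            have hvS : S < ‖v‖ := hv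
            have h1 : S ^ l ≤ ‖v‖ ^ l := Real.rpow_le_rpow hS.le hvS.le hl.le
            have h2 : Real.exp (-α * ℰ v) ≤ K' * Real.exp (-(α * c_l * ‖v‖ ^ l)) := by
              rw [hK'def, ← Real.exp_add]
              apply Real.exp_le_exp.mpr
              have h2a : Ebar + c_l * ‖v‖ ^ l - C_l ≤ ℰ v := by linarith [hgrow_lo v]
              have h2b := mul_le_mul_of_nonneg_left h2a hα.le
              nlinarith
            have h3 : Real.exp (-(α * c_l * ‖v‖ ^ l))
                = Real.exp (-(α * c_l / 2 * ‖v‖ ^ l)) * Real.exp (-(α * c_l / 2 * ‖v‖ ^ l)) := by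
              rw [← Real.exp_add]; congr 1; ring
            have h4 := hAbd ‖v‖ (norm_nonneg v)
            have h5 : Real.exp (-(α * c_l / 2 * ‖v‖ ^ l)) ≤ Real.exp (-(α * c_l / 2 * S ^ l)) :=
              Real.exp_le_exp.mpr (by nlinarith [mul_le_mul_of_nonneg_left h1 (by positivity : (0:ℝ) ≤ α * c_l / 2)])
            calc ‖v‖ ^ p * Real.exp (-α * ℰ v)
                ≤ ‖v‖ ^ p * (K' * Real.exp (-(α * c_l * ‖v‖ ^ l))) :=
                  mul_le_mul_of_nonneg_left h2 (Real.rpow_nonneg (norm_nonneg v) p)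
              _ = K' * (‖v‖ ^ p * Real.exp (-(α * c_l / 2 * ‖v‖ ^ l)))
                    * Real.exp (-(α * c_l / 2 * ‖v‖ ^ l)) := by rw [h3]; ring
              _ ≤ K' * A * Real.exp (-(α * c_l / 2 * S ^ l)) := by
                  apply mul_le_mul (mul_le_mul_of_nonneg_left h4 hK'.le) h5
                    (Real.exp_nonneg _) (by positivity)
          · rw [Set.indicator_of_notMem hv]
            positivity
        have hBl0 : 0 ≤ B ^ l := Real.rpow_nonneg hB.le l
        calc ∫ v, tailSet.indicator (fun v => ‖v‖ ^ p * Real.exp (-α * ℰ v)) v ∂μ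
            ≤ ∫ _v, K' * A * Real.exp (-(α * c_l / 2 * S ^ l)) ∂μ :=
              integral_mono hTint (integrable_const _) hTle
          _ = K' * A * Real.exp (-(α * c_l / 2 * S ^ l)) := by
              simp [integral_const, measure_univ]
          _ ≤ K' * A * Real.exp (-(α * c_u * B ^ l)) := by
              apply mul_le_mul_of_nonneg_left
                (Real.exp_le_exp.mpr (by nlinarith [mul_nonneg (mul_pos hα hcu).le hBl0]))
                (by positivity)
          _ ≤ K' * A * (2 * Z / K) := by
              apply mul_le_mul_of_nonneg_left ?_ (by positivity)
              rw [le_div_iff₀ hK]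
              nlinarith [hZlb]
          _ = 2 * K' * A / K * Z := by field_simp
          _ ≤ 2 * K' * A / K * (M ^ (p / q) * Z) := by
              apply mul_le_mul_of_nonneg_left ?_ ht2.le
              nlinarith [hZpos]
          _ ≤ (Real.exp (-(α * Ebar)) * 2 ^ (p / q) / (2 * z0) + 2 * K' * A / K)
                * (M ^ (p / q) * Z) := by
              apply mul_le_mul_of_nonneg_right (by linarith)
                (mul_nonneg hMpq.le hZpos.le)
    have hSp : S ^ p = γ ^ p * (2 ^ (p / q) * M ^ (p / q)) := by
      rw [hSdef, Real.mul_rpow hγ0.le hB.le, hBdef, ← Real.rpow_mul h2M.le]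
      have he : 1 / q * p = p / q := by ring
      rw [he, Real.mul_rpow (by norm_num : (0:ℝ) ≤ 2) hM0]
    have hfinal : ∫ v, ‖v‖ ^ p * Real.exp (-α * ℰ v) ∂μ ≤ C3 * M ^ (p / q) * Z := by
      calc ∫ v, ‖v‖ ^ p * Real.exp (-α * ℰ v) ∂μ
          ≤ S ^ p * Z + ∫ v, tailSet.indicator (fun v => ‖v‖ ^ p * Real.exp (-α * ℰ v)) v ∂μ :=
            hstep1
        _ ≤ γ ^ p * (2 ^ (p / q) * M ^ (p / q)) * Z
              + (Real.exp (-(α * Ebar)) * 2 ^ (p / q) / (2 * z0) + 2 * K' * A / K)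
                * (M ^ (p / q) * Z) := by
            rw [hSp]
            linarith [hstep2]
        _ = C3 * M ^ (p / q) * Z := by rw [hC3def]; ring
    have hRHS : (C3 ^ (q / p) * M) ^ (p / q) = C3 * M ^ (p / q) := by
      rw [Real.mul_rpow (Real.rpow_nonneg hC3.le _) hM0, ← Real.rpow_mul hC3.le]
      have he : q / p * (p / q) = 1 := by field_simp
      rw [he, Real.rpow_one]
    rw [hRHS, div_le_iff₀ hZpos]
    exact hfinal
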